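/- With notation as above, the array N_l (listing string indices sorted by their l-suffixes) equals the concatenation Π_{c_0}(N_{l-1}) · Π_{c_1}(N_{l-1}) · ... · Π_{c_σ}(N_{l-1}), where c_0 < c_1 < ... < c_σ is the ordered alphabet. -/

import Mathlib

/-- Strict order on string indices given by comparing the `l`-suffixes of the
corresponding strings lexicographically, with ties broken by string index. -/
def suffOrd {A : Type*} [LinearOrder A] {m k : ℕ} (s : Fin m → Fin k → A)
    (l : ℕ) (q q' : Fin m) : Prop :=
  List.Lex (· < ·) ((List.ofFn (s q)).drop (k - l)) ((List.ofFn (s q')).drop (k - l)) ∨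
    ((List.ofFn (s q)).drop (k - l) = (List.ofFn (s q')).drop (k - l) ∧ (q : ℕ) < (q' : ℕ))


lemma suffOrd_antisymm {A : Type*} [LinearOrder A] {m k : ℕ} (s : Fin m → Fin k → A)
    (l : ℕ) : IsAntisymm (Fin m) (suffOrd s l) := by
  constructor
  rintro a b (h1 | ⟨he1, h1⟩) (h2 | ⟨he2, h2⟩)
  · exact absurd h2 (asymm h1)
  · rw [he2] at h1; exact absurd h1 (irrefl _)
  · rw [he1] at h2; exact absurd h2 (irrefl _)
  · omega

lemma drop_suff {A : Type*} [LinearOrder A] {m k : ℕ} (s : Fin m → Fin k → A)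
    {l : ℕ} (hl1 : 1 ≤ l) (hlk : l ≤ k) (q : Fin m) :
    (List.ofFn (s q)).drop (k - l) =
      s q ⟨k - l, Nat.sub_lt_of_pos_le hl1 hlk⟩ :: (List.ofFn (s q)).drop (k - (l - 1)) := by
  have hlen : k - l < (List.ofFn (s q)).length := by simp; omega
  rw [List.drop_eq_getElem_cons hlen, List.getElem_ofFn]
  congr 2
  omega

/-- Over the ordered alphabet `c_0 < c_1 < … < c_σ` (here `Fin (σ+1)`,
with `c_0 = 0` the sentinel, not occurring in the strings), let `Nprev` be the array of
string indices sorted by their `(l-1)`-suffixes and `Nl` the array of string indices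
sorted by their `l`-suffixes (ties by index).  Then `Nl` equals the concatenation
`Π_{c_0}(Nprev) · Π_{c_1}(Nprev) · ⋯ · Π_{c_σ}(Nprev)`, where `Π_c(Nprev)` is the
subsequence of `Nprev` at positions whose `(l-1)`-suffix is preceded by the symbol `c`. -/
theorem Nl_eq_concat_of_projections {m k σ : ℕ}
    (s : Fin m → Fin k → Fin (σ + 1)) (hsent : ∀ q i, s q i ≠ 0)
    (l : ℕ) (hl1 : 1 ≤ l) (hlk : l ≤ k)
    (Nprev : List (Fin m)) (hperm : Nprev.Perm (Finset.univ : Finset (Fin m)).toList)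
    (hsort : Nprev.Pairwise (suffOrd s (l - 1)))
    (Nl : List (Fin m)) (hperm' : Nl.Perm (Finset.univ : Finset (Fin m)).toList)
    (hsort' : Nl.Pairwise (suffOrd s l)) :
    Nl = ((List.finRange (σ + 1)).map
      (fun c => Nprev.filter (fun q => s q ⟨k - l, by omega⟩ == c))).flatten := by
  set P := fun (c : Fin (σ+1)) => Nprev.filter (fun q => s q ⟨k - l, by omega⟩ == c) with hP
  haveI := suffOrd_antisymm s l
  -- permutation
  have hflat : Nprev.Perm ((List.finRange (σ + 1)).map P).flatten := by
    rw [List.perm_iff_count]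
    intro q
    rw [List.count_flatten, List.map_map]
    have hmap : ((List.finRange (σ + 1)).map (List.count q ∘ P)) =
        (List.finRange (σ + 1)).map
          (fun c => if c = s q ⟨k - l, by omega⟩ then Nprev.count q else 0) := by
      apply List.map_congr_left
      intro c _
      by_cases hc : s q ⟨k - l, by omega⟩ = c
      · simp only [Function.comp, hP, if_pos hc.symm]
        exact List.count_filter (by simp [hc])
      · simp only [Function.comp, hP, if_neg (Ne.symm hc)]
        apply List.count_eq_zero.mpr
        intro hmem
        have := (List.mem_filter.mp hmem).2
        exact hc (by simpa using this)
    rw [hmap]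
    rw [← Fin.sum_univ_def]
    simp [Finset.sum_ite_eq]
  -- sortedness of the RHS
  have hsorted : (((List.finRange (σ + 1)).map P).flatten).Pairwise (suffOrd s l) := by
    rw [List.pairwise_flatten]
    constructor
    · intro L hL
      rw [List.mem_map] at hL
      obtain ⟨c, _, rfl⟩ := hL
      have h1 : (P c).Pairwise (suffOrd s (l-1)) := hsort.filter _
      refine h1.imp_of_mem ?_
      intro x y hx hy hxy
      have hxc : s x ⟨k - l, by omega⟩ = c := by
        simpa using (List.mem_filter.mp hx).2
      have hyc : s y ⟨k - l, by omega⟩ = c := by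
        simpa using (List.mem_filter.mp hy).2
      rw [suffOrd, drop_suff s hl1 hlk x, drop_suff s hl1 hlk y, hxc, hyc]
      rcases hxy with h | ⟨he, hlt⟩
      · exact Or.inl (List.Lex.cons h)
      · exact Or.inr ⟨by rw [he], hlt⟩
    · rw [List.pairwise_map]
      refine (List.pairwise_lt_finRange (σ+1)).imp_of_mem ?_
      intro c c' _ _ hcc x hx y hy
      have hxc : s x ⟨k - l, by omega⟩ = c := by
        simpa using (List.mem_filter.mp hx).2
      have hyc : s y ⟨k - l, by omega⟩ = c' := by
        simpa using (List.mem_filter.mp hy).2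
      left
      rw [drop_suff s hl1 hlk x, drop_suff s hl1 hlk y, hxc, hyc]
      exact List.Lex.rel hcc
  exact List.Perm.eq_of_pairwise (fun a b _ _ h1 h2 => (suffOrd_antisymm s l).antisymm a b h1 h2) hsort' hsorted (hperm'.trans (hperm.symm.trans hflat))
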